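/- Let X ⊆ ℝ^s be compact, f : X → ℝ^p continuous, M_0 a p×p positive semidefinite symmetric real matrix, and a ∈ (0,1). For a Borel probability measure ξ on X let M(ξ) = ∫_X f(x) f(x)ᵀ dξ(x) and R(ξ) = a·M(ξ) + (1−a)·M_0. If ξ* has R(ξ*) positive definite and ξ* maximizes det R(ξ) over all Borel probability measures on X, then f(x)ᵀ R(ξ*)⁻¹ f(x) = trace( M(ξ*) R(ξ*)⁻¹ ) for ξ*-almost every x ∈ X; in particular the sensitivity function attains its extreme value at the support points of ξ*. -/

import Mathlib

open Matrix MeasureTheory Polynomial Topology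

/-- Information matrix `M(ξ) = ∫ f(x) f(x)ᵀ dξ(x)` of a design `ξ` on `X`. -/
noncomputable def infoM {s p : ℕ} {X : Set (Fin s → ℝ)} (f : X → Fin p → ℝ)
    (ξ : Measure X) : Matrix (Fin p) (Fin p) ℝ :=
  Matrix.of fun i j => ∫ x, f x i * f x j ∂ξ

/-- Augmented information matrix `R(ξ) = a M(ξ) + (1 − a) M₀`. -/
noncomputable def augM {s p : ℕ} {X : Set (Fin s → ℝ)} (f : X → Fin p → ℝ)
    (M0 : Matrix (Fin p) (Fin p) ℝ) (a : ℝ) (ξ : Measure X) :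
    Matrix (Fin p) (Fin p) ℝ :=
  a • infoM f ξ + (1 - a) • M0

lemma trace_nonpos_of_det_max {p : ℕ} (R D : Matrix (Fin p) (Fin p) ℝ) (hR : R.PosDef)
    (h : ∀ t : ℝ, t ∈ Set.Ioc (0:ℝ) 1 → (R + t • D).det ≤ R.det) :
    Matrix.trace (R⁻¹ * D) ≤ 0 := by
  set C := R⁻¹ * D with hC
  have hdet : 0 < R.det := hR.det_pos
  have hinv : R * R⁻¹ = 1 := Matrix.mul_nonsing_inv R hdet.ne'.isUnit
  have key : ∀ t : ℝ, R + t • D = R * (1 + t • C) := by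
    intro t
    rw [Matrix.mul_add, Matrix.mul_one, Matrix.mul_smul, hC, ← Matrix.mul_assoc, hinv,
      Matrix.one_mul]
  set q : Polynomial ℝ :=
    (Matrix.det (1 + (Polynomial.X : Polynomial ℝ) • C.map Polynomial.C)).divX.divX
    with hq
  have hexp : ∀ t : ℝ, (R + t • D).det = R.det * (1 + Matrix.trace C * t + q.eval t * t ^ 2) := by
    intro t
    rw [key t, Matrix.det_mul, Matrix.det_one_add_smul t C]
  have hle : ∀ t : ℝ, t ∈ Set.Ioc (0:ℝ) 1 → Matrix.trace C + q.eval t * t ≤ 0 := by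
    intro t ht
    have h1 := h t ht
    rw [hexp t] at h1
    have h2 : Matrix.trace C * t + q.eval t * t ^ 2 ≤ 0 := by nlinarith [hdet]
    have h3 : (Matrix.trace C + q.eval t * t) * t ≤ 0 * t := by nlinarith [h2]
    exact (mul_le_mul_iff_of_pos_right ht.1).mp h3
  have hcont : Continuous fun t : ℝ => Matrix.trace C + q.eval t * t := by
    exact continuous_const.add (q.continuous.mul continuous_id)
  have hfinal : Matrix.trace C + q.eval 0 * 0 ≤ 0 := by
    haveI hne : (𝓝[>] (0:ℝ)).NeBot := nhdsGT_neBot 0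
    refine le_of_tendsto ((hcont.tendsto 0).mono_left
      (nhdsWithin_le_nhds : 𝓝[Set.Ioi (0:ℝ)] 0 ≤ 𝓝 0)) ?_
    filter_upwards [Ioc_mem_nhdsGT (by norm_num : (0:ℝ) < 1)] with t ht
    exact hle t ht
  simpa using hfinal

/-- Support-point condition of the general equivalence theorem (D-criterion case):
if `ξ*` maximizes `det R(ξ)`, then the sensitivity function attains its extreme value
`trace(M(ξ*) R(ξ*)⁻¹)` at `ξ*`-almost every point. -/
theorem stmt6 {s p : ℕ} (X : Set (Fin s → ℝ)) (hX : IsCompact X)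
    (f : X → Fin p → ℝ) (hf : Continuous f)
    (M0 : Matrix (Fin p) (Fin p) ℝ) (hM0 : M0.PosSemidef)
    (a : ℝ) (ha : a ∈ Set.Ioo (0 : ℝ) 1)
    (ξs : Measure X) [IsProbabilityMeasure ξs]
    (hR : (augM f M0 a ξs).PosDef)
    (hopt : ∀ ξ : Measure X, IsProbabilityMeasure ξ →
        (augM f M0 a ξ).det ≤ (augM f M0 a ξs).det) :
    ∀ᵐ x ∂ξs, f x ⬝ᵥ (augM f M0 a ξs)⁻¹ *ᵥ f x =
      Matrix.trace (infoM f ξs * (augM f M0 a ξs)⁻¹) := by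
  obtain ⟨ha0, ha1⟩ := ha
  haveI : CompactSpace X := isCompact_iff_compactSpace.mp hX
  set R := augM f M0 a ξs with hRdef
  set M := infoM f ξs with hMdef
  -- continuity and integrability of entrywise products
  have hcont : ∀ i j : Fin p, Continuous fun x : X => f x i * f x j := fun i j =>
    ((continuous_apply i).comp hf).mul ((continuous_apply j).comp hf)
  have hcs : ∀ g : X → ℝ, HasCompactSupport g := fun g =>
    IsCompact.of_isClosed_subset isCompact_univ (isClosed_tsupport g) (Set.subset_univ _)
  have hint : ∀ i j : Fin p, Integrable (fun x : X => f x i * f x j) ξs := fun i j =>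
    (hcont i j).integrable_of_hasCompactSupport (hcs _)
  -- key pointwise inequality
  have hkey : ∀ x₀ : X, f x₀ ⬝ᵥ R⁻¹ *ᵥ f x₀ ≤ Matrix.trace (M * R⁻¹) := by
    intro x₀
    set N : Matrix (Fin p) (Fin p) ℝ := Matrix.of fun i j => f x₀ i * f x₀ j with hN
    set D : Matrix (Fin p) (Fin p) ℝ := a • (N - M) with hD
    have hdetle : ∀ t : ℝ, t ∈ Set.Ioc (0:ℝ) 1 → (R + t • D).det ≤ R.det := by
      intro t ht
      set ξt : Measure X :=
        ENNReal.ofReal (1 - t) • ξs + ENNReal.ofReal t • Measure.dirac x₀ with hξt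
      haveI hprob : IsProbabilityMeasure ξt := by
        constructor
        simp only [hξt, Measure.add_apply, Measure.smul_apply, smul_eq_mul,
          measure_univ, mul_one, Measure.dirac_apply_of_mem (Set.mem_univ x₀)]
        rw [← ENNReal.ofReal_add (by linarith [ht.2]) ht.1.le]
        norm_num
      have hinfo : infoM f ξt = (1 - t) • M + t • N := by
        ext i j
        have hid : Integrable (fun x : X => f x i * f x j) (Measure.dirac x₀) :=
          (hcont i j).integrable_of_hasCompactSupport (hcs _)
        simp only [infoM, Matrix.of_apply, hξt]
        rw [integral_add_measure ((hint i j).smul_measure ENNReal.ofReal_ne_top)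
          (hid.smul_measure ENNReal.ofReal_ne_top),
          integral_smul_measure, integral_smul_measure, integral_dirac,
          ENNReal.toReal_ofReal (by linarith [ht.2]), ENNReal.toReal_ofReal ht.1.le]
        simp [Matrix.add_apply, Matrix.smul_apply, hMdef, infoM, hN, smul_eq_mul]
      have haug : augM f M0 a ξt = R + t • D := by
        rw [augM, hinfo, hRdef, augM, hD, hMdef]
        module
      have := hopt ξt hprob
      rwa [haug] at this
    have htr := trace_nonpos_of_det_max R D hR hdetle
    have htr2 : Matrix.trace (R⁻¹ * N) ≤ Matrix.trace (R⁻¹ * M) := by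
      rw [hD, Matrix.mul_smul, Matrix.trace_smul, Matrix.mul_sub, Matrix.trace_sub,
        smul_eq_mul] at htr
      nlinarith [htr]
    calc f x₀ ⬝ᵥ R⁻¹ *ᵥ f x₀ = Matrix.trace (R⁻¹ * N) := by
          simp only [dotProduct, Matrix.mulVec, Matrix.trace, Matrix.diag,
            Matrix.mul_apply, hN, Matrix.of_apply, dotProduct, Finset.mul_sum]
          refine Finset.sum_congr rfl fun i _ => Finset.sum_congr rfl fun j _ => by ring
      _ ≤ Matrix.trace (R⁻¹ * M) := htr2
      _ = Matrix.trace (M * R⁻¹) := Matrix.trace_mul_comm _ _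
  -- the sensitivity function as an explicit finite sum
  set S : X → ℝ := fun x => ∑ i, ∑ j, (f x i * f x j) * R⁻¹ j i with hS
  have hSeq : ∀ x : X, f x ⬝ᵥ R⁻¹ *ᵥ f x = S x := by
    intro x
    simp only [hS, dotProduct, Matrix.mulVec, dotProduct, Finset.mul_sum]
    rw [Finset.sum_comm]
    refine Finset.sum_congr rfl fun i _ => Finset.sum_congr rfl fun j _ => by ring
  have hSint : Integrable S ξs :=
    integrable_finset_sum _ fun i _ => integrable_finset_sum _ fun j _ =>
      (hint i j).mul_const _
  have hSavg : ∫ x, S x ∂ξs = Matrix.trace (M * R⁻¹) := by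
    rw [hS]
    rw [integral_finset_sum _ fun i _ => integrable_finset_sum _ fun j _ =>
      (hint i j).mul_const _]
    simp only [Matrix.trace, Matrix.diag, Matrix.mul_apply, hMdef, infoM, Matrix.of_apply]
    refine Finset.sum_congr rfl fun i _ => ?_
    rw [integral_finset_sum _ fun j _ => (hint i j).mul_const _]
    refine Finset.sum_congr rfl fun j _ => integral_mul_const _ _
  -- conclude a.e. equality
  set c : ℝ := Matrix.trace (M * R⁻¹) with hc
  have hnonneg : 0 ≤ fun x => c - S x := fun x => by
    have := hkey x
    rw [hSeq x] at this
    simpa using this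
  have hinteg : Integrable (fun x => c - S x) ξs := (integrable_const c).sub hSint
  have hzero : ∫ x, (c - S x) ∂ξs = 0 := by
    rw [integral_sub (integrable_const c) hSint, hSavg, integral_const]
    simp
  have hae := (integral_eq_zero_iff_of_nonneg hnonneg hinteg).mp hzero
  filter_upwards [hae] with x hx
  have : c - S x = 0 := hx
  rw [hSeq x]
  show S x = c
  linarith [this]
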